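/- Let g ≥ 2 be an integer, d ≥ 1, n ≥ 2 integers, and g_C ≥ 0, s ≥ 1 integers. If 2g_{C̃} − 2 = d·n·(2g_C − 2 + ((n−1)/n)·s), ω̃² = d·n·ω², r̃ = (d/n)·r, and the inequality ω̃² ≤ 3r̃ + (2g_{C̃} − 2)(2g − 2) holds, then ω² ≤ (2g−2)(2g_C − 2 + s) + 3r/n² − (2g−2)s/n. -/

import Mathlib

theorem stmt_16 (g d n : ℕ) (hg : 2 ≤ g) (hd : 1 ≤ d) (hn : 2 ≤ n)
    (gC s : ℕ) (hs : 1 ≤ s) (tC ω2t rt ω2 r : ℝ)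
    (htC : tC = (d : ℝ) * n * (2 * (gC : ℝ) - 2 + ((n : ℝ) - 1) / n * s))
    (hω2t : ω2t = (d : ℝ) * n * ω2)
    (hrt : rt = ((d : ℝ) / n) * r)
    (hMiyaoka : ω2t ≤ 3 * rt + tC * (2 * (g : ℝ) - 2)) :
    ω2 ≤ (2 * (g : ℝ) - 2) * (2 * (gC : ℝ) - 2 + s) + 3 * r / n ^ 2 - (2 * (g : ℝ) - 2) * s / n := by
  have hd' : (1:ℝ) ≤ d := by exact_mod_cast hd
  have hn' : (2:ℝ) ≤ n := by exact_mod_cast hn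
  have hn0 : (0:ℝ) < n := by linarith
  have hd0 : (0:ℝ) < d := by linarith
  subst htC hω2t hrt
  have h : (d : ℝ) * n * ω2 ≤ ((d : ℝ) * r * 3 + (d : ℝ) * n * ((2 * (gC : ℝ) - 2) * n + ((n : ℝ) - 1) * s) * (2 * (g : ℝ) - 2)) / n := by
    have : (3 : ℝ) * ((d : ℝ) / n * r) + (d : ℝ) * n * (2 * (gC : ℝ) - 2 + ((n : ℝ) - 1) / n * s) * (2 * (g : ℝ) - 2)
        = ((d : ℝ) * r * 3 + (d : ℝ) * n * ((2 * (gC : ℝ) - 2) * n + ((n : ℝ) - 1) * s) * (2 * (g : ℝ) - 2)) / n := by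
      field_simp
    linarith [hMiyaoka, this.symm.le]
  have h' := (le_div_iff₀ hn0).mp h
  have targetd : ((d:ℝ)) * (ω2 * n ^ 3) ≤ ((d:ℝ)) * ((2 * (g : ℝ) - 2) * (2 * (gC : ℝ) - 2 + s) * n ^ 3 + 3 * r * n - (2 * (g : ℝ) - 2) * s * n ^ 2) := by
    nlinarith [mul_le_mul_of_nonneg_right h' hn0.le]
  have target := le_of_mul_le_mul_left targetd hd0
  have hn3 : (0:ℝ) < (n:ℝ) ^ 3 := by positivity
  rw [show (2 * (g : ℝ) - 2) * (2 * (gC : ℝ) - 2 + s) + 3 * r / n ^ 2 - (2 * (g : ℝ) - 2) * s / n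
      = ((2 * (g : ℝ) - 2) * (2 * (gC : ℝ) - 2 + s) * n ^ 3 + 3 * r * n - (2 * (g : ℝ) - 2) * s * n ^ 2) / n ^ 3 from by
        field_simp, le_div_iff₀ hn3]
  exact target
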